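/- For every α > 0 and every fixed q ∈ (0,1), the difference-quotient quasi-optimality function satisfies ψ_QD(α) ≤ q^{-1} e1(α), i.e. (1−q)^{-1}‖u_α − u_{qα}‖ ≤ q^{-1}(‖u_α^+ − u_*‖ + ‖u_α − u_α^+‖). -/

import Mathlib

open MeasureTheory
open scoped RealInnerProductSpace

noncomputable section

variable {H F : Type*} [NormedAddCommGroup H] [InnerProductSpace ℝ H] [CompleteSpace H]
  [NormedAddCommGroup F] [InnerProductSpace ℝ F] [CompleteSpace F]

/-- The inverse `(α I + A* A)⁻¹` (as `Ring.inverse`; for `α > 0` the operator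
`α I + A* A` is boundedly invertible, so `Ring.inverse` is its genuine inverse). -/
def tikInv (A : H →L[ℝ] F) (α : ℝ) : H →L[ℝ] H :=
  Ring.inverse (α • (1 : H →L[ℝ] H) + (ContinuousLinearMap.adjoint A).comp A)

/-- Tikhonov approximation `u_α = (α I + A* A)⁻¹ A* f`. -/
def tikSol (A : H →L[ℝ] F) (f : F) (α : ℝ) : H :=
  tikInv A α (ContinuousLinearMap.adjoint A f)

/-- Quasi-optimality function `ψ_Q(α) = α ‖(α I + A* A)⁻² A* f‖`. -/
def psiQ (A : H →L[ℝ] F) (f : F) (α : ℝ) : ℝ :=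
  α * ‖(tikInv A α ^ 2) (ContinuousLinearMap.adjoint A f)‖

/-- Error functional `e1(α) = ‖u_α⁺ - u_*‖ + ‖u_α - u_α⁺‖`. -/
def e1 (A : H →L[ℝ] F) (f fstar : F) (ustar : H) (α : ℝ) : ℝ :=
  ‖tikSol A fstar α - ustar‖ + ‖tikSol A f α - tikSol A fstar α‖

/-- Error functional `e2(α, δ) = ‖u_α⁺ - u_*‖ + δ/(2 √α)`. -/
def e2 (A : H →L[ℝ] F) (fstar : F) (ustar : H) (δ α : ℝ) : ℝ :=
  ‖tikSol A fstar α - ustar‖ + δ / (2 * Real.sqrt α)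

/-- Modified discrepancy `d_MD(α) = ‖B_α (A u_α - f)‖` where
`B_α = α^{1/2} (α I + A A*)^{-1/2}`; since `B_α` is positive and selfadjoint,
`‖B_α w‖² = α ⟪(α I + A A*)⁻¹ w, w⟫`, which is used as the definition. -/
def dMD (A : H →L[ℝ] F) (f : F) (α : ℝ) : ℝ :=
  Real.sqrt (α * ⟪(Ring.inverse (α • (1 : F →L[ℝ] F) + A.comp (ContinuousLinearMap.adjoint A)))
      (A (tikSol A f α) - f), A (tikSol A f α) - f⟫)

/-- `k` is a local minimum point of `j ↦ ψ(α_j)` on the grid `j = 0, …, N`: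
either `k ≤ N - 1`, `ψ k < ψ (k+1)` and (`k = 0` or there is `j ≥ 1` with
`ψ k = ψ (k-1) = ⋯ = ψ (k-j+1) < ψ (k-j)`); or `k = N` and there is `j ≥ 1` with
`ψ N = ⋯ = ψ (N-j+1) < ψ (N-j)`. -/
def IsLocMinIdx (ψ : ℕ → ℝ) (N k : ℕ) : Prop :=
  (k < N ∧ ψ k < ψ (k + 1) ∧
    (k = 0 ∨ ∃ j, 1 ≤ j ∧ j ≤ k ∧ (∀ i, k - j < i → i ≤ k → ψ i = ψ k) ∧ ψ k < ψ (k - j)))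
  ∨ (k = N ∧ ∃ j, 1 ≤ j ∧ j ≤ N ∧ (∀ i, N - j < i → i ≤ N → ψ i = ψ N) ∧ ψ N < ψ (N - j))

/-- for every `α > 0` and `q ∈ (0,1)`,
`ψ_QD(α) = (1-q)⁻¹ ‖u_α - u_{qα}‖ ≤ q⁻¹ e1(α)`. -/
lemma tik_inner (A : H →L[ℝ] F) (c : ℝ) (x : H) :
    ⟪(c • (1 : H →L[ℝ] H) + (ContinuousLinearMap.adjoint A).comp A) x, x⟫ =
      c * ‖x‖ ^ 2 + ‖A x‖ ^ 2 := by
  simp [inner_add_left, real_inner_smul_left, ContinuousLinearMap.adjoint_inner_left,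
    real_inner_self_eq_norm_sq]

lemma tik_lower (A : H →L[ℝ] F) {c : ℝ} (hc : 0 < c) (x : H) :
    c * ‖x‖ ≤ ‖(c • (1 : H →L[ℝ] H) + (ContinuousLinearMap.adjoint A).comp A) x‖ := by
  set T := c • (1 : H →L[ℝ] H) + (ContinuousLinearMap.adjoint A).comp A with hT
  rcases eq_or_ne x 0 with rfl | hx
  · simp
  · have hxn : 0 < ‖x‖ := norm_pos_iff.mpr hx
    have h1 : c * ‖x‖ * ‖x‖ ≤ ⟪T x, x⟫ := by
      rw [tik_inner]
      nlinarith [sq_nonneg ‖A x‖]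
    have h2 : ⟪T x, x⟫ ≤ ‖T x‖ * ‖x‖ := real_inner_le_norm _ _
    have := h1.trans h2
    exact le_of_mul_le_mul_right this hxn

lemma tik_isUnit (A : H →L[ℝ] F) {c : ℝ} (hc : 0 < c) :
    IsUnit (c • (1 : H →L[ℝ] H) + (ContinuousLinearMap.adjoint A).comp A) := by
  set T := c • (1 : H →L[ℝ] H) + (ContinuousLinearMap.adjoint A).comp A with hT
  have hbound : ∀ x, ‖x‖ ≤ (⟨c⁻¹, le_of_lt (inv_pos.mpr hc)⟩ : NNReal) * ‖T x‖ := by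
    intro x
    have := tik_lower A hc x
    show ‖x‖ ≤ c⁻¹ * ‖T x‖
    calc ‖x‖ = c⁻¹ * (c * ‖x‖) := by field_simp
    _ ≤ c⁻¹ * ‖T x‖ := mul_le_mul_of_nonneg_left this (by positivity)
  have hanti : AntilipschitzWith _ T := T.antilipschitz_of_bound hbound
  have hker : T.ker = ⊥ := LinearMap.ker_eq_bot.mpr hanti.injective
  have hclosed : IsClosed (T.range : Set H) :=
    hanti.isClosed_range T.uniformContinuous
  have hrange : T.range = ⊤ := by
    haveI := hclosed.completeSpace_coe
    rw [← (T.range).orthogonal_orthogonal]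
    rw [Submodule.eq_top_iff']
    intro v w hw
    obtain rfl : w = 0 := by
      have h1 : c * ‖w‖ * ‖w‖ ≤ ⟪T w, w⟫ := by
        have h := tik_inner A c w
        show c * ‖w‖ * ‖w‖ ≤ ⟪(c • (1 : H →L[ℝ] H) + (ContinuousLinearMap.adjoint A).comp A) w, w⟫
        rw [h]; nlinarith [sq_nonneg ‖A w‖]
      have h0 : ⟪T w, w⟫ = 0 := hw _ ⟨w, rfl⟩
      have : ‖w‖ = 0 := by
        by_contra hne
        have hp : 0 < ‖w‖ := lt_of_le_of_ne (norm_nonneg w) (Ne.symm hne)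
        nlinarith [mul_pos (mul_pos hc hp) hp]
      simpa using this
    exact inner_zero_left _
  exact ⟨(ContinuousLinearEquiv.ofBijective T hker hrange).toUnit, rfl⟩


set_option maxHeartbeats 1000000 in
theorem psiQD_le_inv_q_mul_e1 (A : H →L[ℝ] F) (f fstar : F) (ustar : H)
    (hA : A ustar = fstar) (q : ℝ) (hq : q ∈ Set.Ioo (0 : ℝ) 1) (α : ℝ) (hα : 0 < α) :
    (1 - q)⁻¹ * ‖tikSol A f α - tikSol A f (q * α)‖ ≤ q⁻¹ * e1 A f fstar ustar α := by
  obtain ⟨hq0, hq1⟩ := hq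
  have hqα : 0 < q * α := mul_pos hq0 hα
  set S : H →L[ℝ] H := (ContinuousLinearMap.adjoint A).comp A with hS
  set T1 : H →L[ℝ] H := α • (1 : H →L[ℝ] H) + S with hT1
  set T2 : H →L[ℝ] H := (q * α) • (1 : H →L[ℝ] H) + S with hT2
  have hU1 : IsUnit T1 := tik_isUnit A hα
  have hU2 : IsUnit T2 := tik_isUnit A hqα
  set R1 : H →L[ℝ] H := Ring.inverse T1 with hR1
  set R2 : H →L[ℝ] H := Ring.inverse T2 with hR2
  have hT1R1 : ∀ x, T1 (R1 x) = x := by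
    intro x
    have h : T1 * R1 = 1 := Ring.mul_inverse_cancel _ hU1
    calc T1 (R1 x) = (T1 * R1) x := rfl
    _ = x := by rw [h]; rfl
  have hT2R2 : ∀ x, T2 (R2 x) = x := by
    intro x
    have h : T2 * R2 = 1 := Ring.mul_inverse_cancel _ hU2
    calc T2 (R2 x) = (T2 * R2) x := rfl
    _ = x := by rw [h]; rfl
  have hR2T2 : ∀ x, R2 (T2 x) = x := by
    intro x
    have h : R2 * T2 = 1 := Ring.inverse_mul_cancel _ hU2
    calc R2 (T2 x) = (R2 * T2) x := rfl
    _ = x := by rw [h]; rfl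
  set u1 : H := tikSol A f α with hu1
  set u2 : H := tikSol A f (q * α) with hu2
  set up : H := tikSol A fstar α with hup
  have hu1' : u1 = R1 (ContinuousLinearMap.adjoint A f) := rfl
  have hup' : up = R1 (ContinuousLinearMap.adjoint A fstar) := rfl
  have hu2' : u2 = R2 (ContinuousLinearMap.adjoint A f) := rfl
  -- Step 1: u1 - u2 = -((1-q)*α) • R2 u1
  have hT1u1 : T1 u1 = ContinuousLinearMap.adjoint A f := by rw [hu1']; exact hT1R1 _
  have hT1split : ∀ x : H, T1 x = T2 x + ((1 - q) * α) • x := by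
    intro x
    show α • x + S x = ((q * α) • x + S x) + ((1 - q) * α) • x
    module
  have hstep1 : u1 - u2 = -(((1 - q) * α) • R2 u1) := by
    have : u2 = R2 (T1 u1) := by rw [hT1u1, hu2']
    rw [hT1split u1] at this
    rw [map_add, hR2T2, _root_.map_smul] at this
    rw [this]; abel
  -- Step 2: pointwise bound for α • R2
  have hB1 : ∀ x : H, ‖R2 x‖ * α ≤ q⁻¹ * ‖x‖ := by
    intro x
    have hl := tik_lower A hqα (R2 x)
    rw [← hT2, hT2R2 x] at hl
    have : q * α * ‖R2 x‖ ≤ ‖x‖ := hl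
    rw [← mul_le_mul_iff_right₀ hq0]
    calc q * (‖R2 x‖ * α) = q * α * ‖R2 x‖ := by ring
    _ ≤ ‖x‖ := this
    _ = q * (q⁻¹ * ‖x‖) := by field_simp
  -- Step 3: α • up = S (ustar - up)
  have hT1up : T1 up = S ustar := by
    rw [hup', hT1R1, ← hA, hS]; rfl
  have hstep3 : α • up = S (ustar - up) := by
    have h1 : α • up + S up = S ustar := by
      rw [← hT1up]; rfl
    rw [map_sub]
    exact eq_sub_of_add_eq h1
  -- Step 4: R2 commutes with S
  have hST2 : ∀ x : H, S (T2 x) = T2 (S x) := by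
    intro x
    show S ((q * α) • x + S x) = (q * α) • S x + S (S x)
    rw [map_add, _root_.map_smul]
  have hcomm' : ∀ x, R2 (S x) = S (R2 x) := by
    intro x
    calc R2 (S x) = R2 (S (T2 (R2 x))) := by rw [hT2R2]
    _ = R2 (T2 (S (R2 x))) := by rw [hST2]
    _ = S (R2 x) := hR2T2 _
  -- Step 5: ‖S w‖ ≤ ‖T2 w‖, hence ‖R2 (S z)‖ ≤ ‖z‖
  have hB2 : ∀ z : H, ‖R2 (S z)‖ ≤ ‖z‖ := by
    intro z
    rw [hcomm']
    set w := R2 z with hw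
    have hz : z = T2 w := (hT2R2 z).symm
    have hinner : ⟪((q * α) • w : H), S w⟫ = (q * α) * ‖A w‖ ^ 2 := by
      rw [real_inner_smul_left]
      congr 1
      rw [hS]
      have : ⟪w, (ContinuousLinearMap.adjoint A).comp A w⟫ = ⟪A w, A w⟫ := by
        exact ContinuousLinearMap.adjoint_inner_right A w (A w)
      rw [this, real_inner_self_eq_norm_sq]
    have hsq : ‖S w‖ ^ 2 ≤ ‖T2 w‖ ^ 2 := by
      have hTw : T2 w = (q * α) • w + S w := rfl
      rw [hTw, norm_add_sq_real, hinner]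
      nlinarith [sq_nonneg ‖(q * α) • (w : H)‖, sq_nonneg ‖A w‖, hqα.le]
    rw [hz]
    nlinarith [norm_nonneg (S w), norm_nonneg (T2 w)]
  -- Assemble
  have hdecomp : α • R2 u1 = α • R2 (u1 - up) + R2 (S (ustar - up)) := by
    rw [← hstep3, _root_.map_smul, map_sub, smul_sub]
    abel
  have hkey : ‖α • R2 u1‖ ≤ q⁻¹ * e1 A f fstar ustar α := by
    have h1 : ‖α • R2 (u1 - up)‖ ≤ q⁻¹ * ‖u1 - up‖ := by
      rw [norm_smul, Real.norm_eq_abs, abs_of_pos hα, mul_comm]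
      exact hB1 _
    have h2 : ‖R2 (S (ustar - up))‖ ≤ ‖up - ustar‖ := by
      calc ‖R2 (S (ustar - up))‖ ≤ ‖ustar - up‖ := hB2 _
      _ = ‖up - ustar‖ := norm_sub_rev _ _
    have hq1' : (1 : ℝ) ≤ q⁻¹ := by rw [le_inv_comm₀ one_pos hq0]; simpa using hq1.le
    calc ‖α • R2 u1‖ ≤ ‖α • R2 (u1 - up)‖ + ‖R2 (S (ustar - up))‖ := by
          rw [hdecomp]; exact norm_add_le _ _
    _ ≤ q⁻¹ * ‖u1 - up‖ + ‖up - ustar‖ := add_le_add h1 h2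
    _ ≤ q⁻¹ * ‖u1 - up‖ + q⁻¹ * ‖up - ustar‖ := by
          nlinarith [norm_nonneg (up - ustar)]
    _ = q⁻¹ * (‖up - ustar‖ + ‖u1 - up‖) := by ring
    _ = q⁻¹ * e1 A f fstar ustar α := rfl
  have hnorm : ‖u1 - u2‖ = (1 - q) * ‖α • R2 u1‖ := by
    rw [hstep1, norm_neg, norm_smul, norm_smul, Real.norm_eq_abs, Real.norm_eq_abs,
      abs_of_pos (by nlinarith : (0:ℝ) < (1 - q) * α), abs_of_pos hα]
    ring
  rw [hnorm, ← mul_assoc, inv_mul_cancel₀ (by nlinarith : (1:ℝ) - q ≠ 0), one_mul]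
  exact hkey
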